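/- For every graph G, every vertex v of G, and every integer s ≥ 2, the guessing number satisfies gn(G − v, s) ≤ gn(G, s) ≤ gn(G − v, s) + 1, where G − v is the graph obtained from G by deleting the vertex v and all edges incident to it. -/
import Mathlib


open SimpleGraph

/-- A strategy for the guessing game on `G` with `s` colors: a family of guessing
functions, one per vertex, where each vertex's guess depends only on the colors
of the vertices in its (open) neighborhood. -/
def IsGuessingStrategy {V : Type*} (G : SimpleGraph V) (s : ℕ)
    (f : V → (V → Fin s) → Fin s) : Prop :=
  ∀ (v : V) (c₁ c₂ : V → Fin s), (∀ u, G.Adj v u → c₁ u = c₂ u) → f v c₁ = f v c₂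

/-- The maximum, over all strategies for the guessing game on `G` with `s` colors,
of the number of fixed points of the strategy (colorings where every vertex
guesses its own color correctly). -/
noncomputable def maxFixedPoints {V : Type*} (G : SimpleGraph V) (s : ℕ) : ℕ :=
  sSup {n : ℕ | ∃ f : V → (V → Fin s) → Fin s, IsGuessingStrategy G s f ∧
    n = Nat.card {c : V → Fin s // ∀ v, f v c = c v}}

/-- The guessing number of `G` with `s` colors: the logarithm base `s` of the
maximum number of fixed points of a strategy. -/
noncomputable def guessingNumber {V : Type*} (G : SimpleGraph V) (s : ℕ) : ℝ :=
  Real.logb s (maxFixedPoints G s)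

/-- The join `K_k ⊕ E_{n-k}`: the first `k` vertices form a clique and are joined
to all other vertices; the remaining `n - k` vertices form an independent set. -/
def cliqueJoinEmpty (n k : ℕ) : SimpleGraph (Fin n) :=
  SimpleGraph.fromRel (fun u _ => (u : ℕ) < k)

/-- The extremal number `ex(n, gn_s ≥ a)`: the maximum number of edges over all
graphs on `n` vertices whose guessing number with `s` colors is `< a`. -/
noncomputable def exGN (n s : ℕ) (a : ℝ) : ℕ :=
  sSup {m : ℕ | ∃ G : SimpleGraph (Fin n),
    guessingNumber G s < a ∧ m = Nat.card G.edgeSet}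

/-- `G` is `(gn_s ≥ a)`-saturated: `gn(G,s) < a` but adding any missing edge
raises the guessing number to at least `a`. -/
def GNSaturated {V : Type*} (G : SimpleGraph V) (s : ℕ) (a : ℝ) : Prop :=
  guessingNumber G s < a ∧
    ∀ u w : V, u ≠ w → ¬G.Adj u w →
      a ≤ guessingNumber (G ⊔ SimpleGraph.fromEdgeSet {s(u, w)}) s

/-- The saturation number `sat(n, gn_s ≥ a)`: the minimum number of edges over
all `(gn_s ≥ a)`-saturated graphs on `n` vertices. -/
noncomputable def satGN (n s : ℕ) (a : ℝ) : ℕ :=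
  sInf {m : ℕ | ∃ G : SimpleGraph (Fin n),
    GNSaturated G s a ∧ m = Nat.card G.edgeSet}

/-- The disjoint union `H + E_{n-h}` of a graph `H` on `h` vertices with `n - h`
isolated vertices, realized on `Fin n`. -/
def withIsolated {h : ℕ} (H : SimpleGraph (Fin h)) (n : ℕ) : SimpleGraph (Fin n) :=
  SimpleGraph.fromRel (fun u v =>
    ∃ (hu : (u : ℕ) < h) (hv : (v : ℕ) < h), H.Adj ⟨u, hu⟩ ⟨v, hv⟩)

/-- `K*_{a,a}`: the complete bipartite graph `K_{a,a}` with one subdivided edge.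
Vertices `0, …, a-1` are `x_1, …, x_a`; vertices `a, …, 2a-1` are `y_1, …, y_a`;
vertex `2a` is the subdivision vertex `v_0`, adjacent exactly to `x_1` and `y_1`.
The edge `x_1 y_1` is removed. -/
def Kstar (a : ℕ) : SimpleGraph (Fin (2 * a + 1)) :=
  SimpleGraph.fromRel (fun u v =>
    ((u : ℕ) < a ∧ a ≤ (v : ℕ) ∧ (v : ℕ) < 2 * a ∧ ¬((u : ℕ) = 0 ∧ (v : ℕ) = a)) ∨
    ((u : ℕ) = 2 * a ∧ ((v : ℕ) = 0 ∨ (v : ℕ) = a)))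

/-- Add `b` dominating vertices to a graph `H` on `m` vertices: the first `b`
vertices are adjacent to everything else (and each other), the remaining `m`
vertices induce a copy of `H`. -/
def withDominating {m : ℕ} (H : SimpleGraph (Fin m)) (b : ℕ) :
    SimpleGraph (Fin (b + m)) :=
  SimpleGraph.fromRel (fun u v =>
    (u : ℕ) < b ∨ (v : ℕ) < b ∨
      ∃ (hu : b ≤ (u : ℕ)) (hv : b ≤ (v : ℕ)),
        H.Adj ⟨(u : ℕ) - b, by have := u.isLt; omega⟩
          ⟨(v : ℕ) - b, by have := v.isLt; omega⟩)

/-- `F` is a minimal graph with `gn_s ≥ a`: its guessing number with `s` colors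
is at least `a`, but every proper subgraph has guessing number `< a`. -/
def MinimalGN {V : Type*} [Finite V] (F : SimpleGraph V) (s : ℕ) (a : ℝ) : Prop :=
  a ≤ guessingNumber F s ∧
    ∀ H : F.Subgraph, H ≠ ⊤ → guessingNumber H.coe s < a


section GuessingAux

variable {V : Type*} [Finite V]

lemma gsSet_bddAbove (G : SimpleGraph V) (s : ℕ) :
    BddAbove {n : ℕ | ∃ f : V → (V → Fin s) → Fin s, IsGuessingStrategy G s f ∧
      n = Nat.card {c : V → Fin s // ∀ v, f v c = c v}} := by
  refine ⟨Nat.card (V → Fin s), ?_⟩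
  rintro n ⟨f, -, rfl⟩
  exact Nat.card_le_card_of_injective _ Subtype.val_injective

lemma one_mem_gsSet (G : SimpleGraph V) {s : ℕ} (hs : 1 ≤ s) :
    1 ∈ {n : ℕ | ∃ f : V → (V → Fin s) → Fin s, IsGuessingStrategy G s f ∧
      n = Nat.card {c : V → Fin s // ∀ v, f v c = c v}} := by
  refine ⟨fun _ _ => ⟨0, hs⟩, fun _ _ _ _ => rfl, ?_⟩
  symm
  rw [Nat.card_eq_one_iff_unique]
  exact ⟨⟨fun c₁ c₂ => Subtype.ext (funext fun v => (c₁.2 v).symm.trans (c₂.2 v))⟩,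
    ⟨⟨fun _ => ⟨0, hs⟩, fun _ => rfl⟩⟩⟩

lemma one_le_maxFixedPoints (G : SimpleGraph V) {s : ℕ} (hs : 1 ≤ s) :
    1 ≤ maxFixedPoints G s :=
  le_csSup (gsSet_bddAbove G s) (one_mem_gsSet G hs)

lemma maxFixedPoints_del_le (G : SimpleGraph V) (v : V) {s : ℕ} (hs : 1 ≤ s) :
    maxFixedPoints (G.comap (Subtype.val : {u : V // u ≠ v} → V)) s
      ≤ maxFixedPoints G s := by
  classical
  apply csSup_le ⟨1, one_mem_gsSet _ hs⟩
  rintro n ⟨f', hf', rfl⟩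
  apply le_csSup (gsSet_bddAbove G s)
  refine ⟨fun u c => if h : u = v then ⟨0, hs⟩ else f' ⟨u, h⟩ (fun w => c w.val),
    ?_, ?_⟩
  · intro u c₁ c₂ h
    by_cases hu : u = v
    · simp [hu]
    · simp only [dif_neg hu]
      exact hf' ⟨u, hu⟩ _ _ (fun w hw => h w.1 hw)
  · symm
    apply Nat.card_congr
    refine ⟨fun c => ⟨fun w => c.1 w.val, fun u => by
        have := c.2 u.val
        simp only [dif_neg u.prop] at this
        exact this⟩,
      fun d => ⟨fun w => if h : w = v then ⟨0, hs⟩ else d.1 ⟨w, h⟩, fun u => by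
        by_cases h : u = v
        · simp [h]
        · simp only [dif_neg h]
          have : (fun w : {u : V // u ≠ v} =>
              if h : w.val = v then (⟨0, hs⟩ : Fin s) else d.1 ⟨w.val, h⟩) = d.1 := by
            funext w
            rw [dif_neg w.prop]
          rw [this]
          exact d.2 ⟨u, h⟩⟩,
      ?_, ?_⟩
    · intro c
      apply Subtype.ext
      funext w
      by_cases h : w = v
      · have := c.2 w
        simp only [dif_pos h] at this ⊢
        exact this
      · simp [dif_neg h]
    · intro d
      apply Subtype.ext
      funext w
      simp [dif_neg w.prop]

lemma maxFixedPoints_le_s_mul_del (G : SimpleGraph V) (v : V) {s : ℕ} (hs : 1 ≤ s) :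
    maxFixedPoints G s
      ≤ s * maxFixedPoints (G.comap (Subtype.val : {u : V // u ≠ v} → V)) s := by
  classical
  haveI := Fintype.ofFinite V
  set G' := G.comap (Subtype.val : {u : V // u ≠ v} → V) with hG'
  apply csSup_le ⟨1, one_mem_gsSet _ hs⟩
  rintro n ⟨f, hf, rfl⟩
  -- extension of a coloring of V' by color i at v
  set ext : Fin s → ({u : V // u ≠ v} → Fin s) → (V → Fin s) :=
    fun i d w => if h : w = v then i else d ⟨w, h⟩ with hext
  -- the induced strategy on G' for each color i at v
  set f' : Fin s → {u : V // u ≠ v} → ({u : V // u ≠ v} → Fin s) → Fin s :=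
    fun i u d => f u.val (ext i d) with hf'def
  have hstrat : ∀ i, IsGuessingStrategy G' s (f' i) := by
    intro i u d₁ d₂ h
    apply hf u.val
    intro w hw
    by_cases hwv : w = v
    · simp [hext, hwv]
    · simp only [hext, dif_neg hwv]
      exact h ⟨w, hwv⟩ hw
  have hmem : ∀ i : Fin s,
      Nat.card {d : {u : V // u ≠ v} → Fin s // ∀ u, f' i u d = d u}
        ≤ maxFixedPoints G' s := fun i =>
    le_csSup (gsSet_bddAbove G' s) ⟨f' i, hstrat i, rfl⟩
  have hcard : Nat.card {c : V → Fin s // ∀ u, f u c = c u}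
      = ∑ i : Fin s,
          Nat.card {c : {c : V → Fin s // ∀ u, f u c = c u} // c.1 v = i} := by
    rw [← Nat.card_congr
      (Equiv.sigmaFiberEquiv (fun c : {c : V → Fin s // ∀ u, f u c = c u} => c.1 v)),
      Nat.card_eq_fintype_card, Fintype.card_sigma]
    simp [Nat.card_eq_fintype_card]
  rw [hcard]
  calc ∑ i : Fin s,
          Nat.card {c : {c : V → Fin s // ∀ u, f u c = c u} // c.1 v = i}
      ≤ ∑ _i : Fin s, maxFixedPoints G' s := by
        apply Finset.sum_le_sum
        intro i _
        refine le_trans ?_ (hmem i)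
        have hinj : Function.Injective
            (fun c : {c : {c : V → Fin s // ∀ u, f u c = c u} // c.1 v = i} =>
              (⟨fun w => c.1.1 w.val, ?_⟩ :
                {d : {u : V // u ≠ v} → Fin s // ∀ u, f' i u d = d u})) := ?_
        · exact Nat.card_le_card_of_injective _ hinj
        · intro u
          have hextc : ext i (fun w => c.1.1 w.val) = c.1.1 := by
            funext w
            by_cases h : w = v
            · simp only [hext]
              rw [dif_pos h, h, c.2]
            · simp [hext, dif_neg h]
          simp only [hf'def, hextc]
          exact c.1.2 u.val
        · intro c₁ c₂ h
          apply Subtype.ext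
          apply Subtype.ext
          funext w
          by_cases hw : w = v
          · rw [hw, c₁.2, c₂.2]
          · exact congrFun (congrArg Subtype.val h) ⟨w, hw⟩
    _ = s * maxFixedPoints G' s := by
        simp [Finset.sum_const, mul_comm]

end GuessingAux

/-- Deleting a vertex decreases the guessing number by at most 1:
`gn(G - v, s) ≤ gn(G, s) ≤ gn(G - v, s) + 1`. -/
theorem guessingNumber_deleteVertex (V : Type*) [Finite V] (G : SimpleGraph V)
    (v : V) (s : ℕ) (hs : 2 ≤ s) :
    guessingNumber (G.comap (Subtype.val : {u : V // u ≠ v} → V)) s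
        ≤ guessingNumber G s ∧
      guessingNumber G s
        ≤ guessingNumber (G.comap (Subtype.val : {u : V // u ≠ v} → V)) s + 1 := by
  have hs1 : 1 ≤ s := by omega
  have hs1R : (1 : ℝ) < (s : ℕ) := by exact_mod_cast hs
  set G' := G.comap (Subtype.val : {u : V // u ≠ v} → V)
  have hM' : 1 ≤ maxFixedPoints G' s := one_le_maxFixedPoints _ hs1
  have hM : 1 ≤ maxFixedPoints G s := one_le_maxFixedPoints _ hs1
  have h1 : maxFixedPoints G' s ≤ maxFixedPoints G s := maxFixedPoints_del_le G v hs1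
  have h2 : maxFixedPoints G s ≤ s * maxFixedPoints G' s :=
    maxFixedPoints_le_s_mul_del G v hs1
  have hM'pos : (0 : ℝ) < (maxFixedPoints G' s : ℝ) := by exact_mod_cast hM'
  have hMpos : (0 : ℝ) < (maxFixedPoints G s : ℝ) := by exact_mod_cast hM
  constructor
  · exact Real.logb_le_logb_of_le hs1R hM'pos (by exact_mod_cast h1)
  · unfold guessingNumber
    have : Real.logb s (maxFixedPoints G s)
        ≤ Real.logb s ((s : ℝ) * (maxFixedPoints G' s : ℝ)) := by
      apply Real.logb_le_logb_of_le hs1R hMpos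
      exact_mod_cast h2
    refine this.trans ?_
    rw [Real.logb_mul (by positivity) (ne_of_gt hM'pos),
      Real.logb_self_eq_one hs1R]
    ring_nf
    exact le_refl _
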